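/- Let 𝔉 be a Fraïssé class, let X ∈ 𝔉, and let a and b be separated elements of X. Then [X,a] = [X∖{b},a] in Θ(𝔉). -/

import Mathlib

/-! # Relational structures, embeddings, amalgamations, Fraïssé classes -/

namespace Paper

/-- A relational signature: a set `I` of relation symbols with arities `≥ 1`. -/
structure Signature : Type 1 where
  I : Type
  arity : I → ℕ
  arity_pos : ∀ i, 1 ≤ arity i

variable {σ : Signature}

/-- A (finite relational) structure for the signature `σ`. -/
structure Struc (σ : Signature) : Type 1 where
  carrier : Type
  [fin : Finite carrier]
  rel : ∀ i : σ.I, (Fin (σ.arity i) → carrier) → Prop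

attribute [instance] Struc.fin

/-- An embedding of structures: an injection under which the relations on the source are
exactly the restrictions of the relations on the target. -/
structure Emb (X Y : Struc σ) : Type where
  toFun : X.carrier → Y.carrier
  inj : Function.Injective toFun
  rel_iff : ∀ (i : σ.I) (v : Fin (σ.arity i) → X.carrier),
    Y.rel i (fun j => toFun (v j)) ↔ X.rel i v

/-- The identity embedding. -/
def Emb.id (X : Struc σ) : Emb X X where
  toFun := fun x => x
  inj := fun _ _ h => h
  rel_iff := fun _ _ => Iff.rfl

/-- Composition of embeddings. -/
def Emb.comp {X Y Z : Struc σ} (g : Emb Y Z) (f : Emb X Y) : Emb X Z where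
  toFun := fun x => g.toFun (f.toFun x)
  inj := fun _ _ h => f.inj (g.inj h)
  rel_iff := fun i v => (g.rel_iff i fun j => f.toFun (v j)).trans (f.rel_iff i v)

/-- An embedding is an isomorphism if it is surjective. -/
def Emb.IsIso {X Y : Struc σ} (f : Emb X Y) : Prop := Function.Surjective f.toFun

/-- Two structures are isomorphic. -/
def StrucIso (X Y : Struc σ) : Prop := ∃ f : Emb X Y, f.IsIso

theorem strucIso_refl (X : Struc σ) : StrucIso X X := ⟨Emb.id X, fun y => ⟨y, rfl⟩⟩

/-- The induced structure on a subset of the carrier. -/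
def Struc.restrict (X : Struc σ) (S : Set X.carrier) : Struc σ where
  carrier := S
  rel := fun i v => X.rel i (fun j => (v j : X.carrier))

/-- The inclusion embedding of an induced substructure into the whole structure. -/
def Struc.subEmb (X : Struc σ) (S : Set X.carrier) : Emb (X.restrict S) X where
  toFun := fun a => a.1
  inj := fun _ _ h => Subtype.ext h
  rel_iff := fun _ _ => Iff.rfl

/-- The inclusion embedding between induced substructures on nested subsets. -/
def Struc.inclEmb (X : Struc σ) {S T : Set X.carrier} (h : S ⊆ T) :
    Emb (X.restrict S) (X.restrict T) where
  toFun := fun a => ⟨a.1, h a.2⟩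
  inj := fun a b hab => Subtype.ext (Subtype.mk_eq_mk.mp (by exact hab))
  rel_iff := fun _ _ => Iff.rfl

/-- An amalgamation of `Y₁` and `Y₂` over `X` (along `i₁`, `i₂`). -/
structure Amalg {X Y₁ Y₂ : Struc σ} (i₁ : Emb X Y₁) (i₂ : Emb X Y₂) : Type 1 where
  Z : Struc σ
  j₁ : Emb Y₁ Z
  j₂ : Emb Y₂ Z
  comm : ∀ x, j₁.toFun (i₁.toFun x) = j₂.toFun (i₂.toFun x)
  surj : ∀ z, z ∈ Set.range j₁.toFun ∪ Set.range j₂.toFun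

/-- Isomorphism of amalgamations: a structure isomorphism commuting with the two
embeddings. -/
def Amalg.Iso {X Y₁ Y₂ : Struc σ} {i₁ : Emb X Y₁} {i₂ : Emb X Y₂}
    (A B : Amalg i₁ i₂) : Prop :=
  ∃ f : Emb A.Z B.Z, f.IsIso ∧ (∀ y, f.toFun (A.j₁.toFun y) = B.j₁.toFun y) ∧
    (∀ y, f.toFun (A.j₂.toFun y) = B.j₂.toFun y)

/-- A structure lies in the class `F` up to isomorphism. -/
def MemUpIso (F : Set (Struc σ)) (X : Struc σ) : Prop := ∃ W ∈ F, StrucIso X W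

theorem memUpIso_of_mem {F : Set (Struc σ)} {X : Struc σ} (h : X ∈ F) : MemUpIso F X :=
  ⟨X, h, strucIso_refl X⟩

/-- A Fraïssé class. -/
structure IsFraisse (F : Set (Struc σ)) : Prop where
  nonempty : F.Nonempty
  finClasses : ∀ n : ℕ, ∃ (m : ℕ) (r : Fin m → Struc σ),
    ∀ X ∈ F, Nat.card X.carrier = n → ∃ α, StrucIso X (r α)
  hereditary : ∀ X ∈ F, ∀ Y : Struc σ, Nonempty (Emb Y X) → MemUpIso F Y
  amalg : ∀ (X Y₁ Y₂ : Struc σ), X ∈ F → Y₁ ∈ F → Y₂ ∈ F →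
    ∀ (i₁ : Emb X Y₁) (i₂ : Emb X Y₂), ∃ A : Amalg i₁ i₂, MemUpIso F A.Z

theorem pair_compl_subset_left {α : Type*} (a b : α) : ({a, b} : Set α)ᶜ ⊆ ({a} : Set α)ᶜ :=
  Set.compl_subset_compl.mpr (fun _ hx => Set.mem_insert_iff.mpr (Or.inl hx))

theorem pair_compl_subset_right {α : Type*} (a b : α) : ({a, b} : Set α)ᶜ ⊆ ({b} : Set α)ᶜ :=
  Set.compl_subset_compl.mpr (fun _ hx => Set.mem_insert_iff.mpr (Or.inr hx))

/-- The canonical amalgamation of `X∖{a}` and `X∖{b}` over `X∖{a,b}`, namely `X` itself. -/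
def canonAmalg (X : Struc σ) (a b : X.carrier) (hab : a ≠ b) :
    Amalg (X.inclEmb (pair_compl_subset_left a b)) (X.inclEmb (pair_compl_subset_right a b)) where
  Z := X
  j₁ := X.subEmb ({a} : Set X.carrier)ᶜ
  j₂ := X.subEmb ({b} : Set X.carrier)ᶜ
  comm := fun _ => rfl
  surj := fun z => by
    by_cases hz : z = a
    · exact Or.inr ⟨⟨z, by simp only [Set.mem_compl_iff, Set.mem_singleton_iff, hz]; exact hab⟩, rfl⟩
    · exact Or.inl ⟨⟨z, by simp [hz]⟩, rfl⟩

/-- Two distinct elements `a b` of `X` are separated (relative to the class `F`) if `X` is,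
up to isomorphism of amalgamations, the unique amalgamation of `X∖{a}` and `X∖{b}` over
`X∖{a,b}` lying in `F`. -/
def Separated (F : Set (Struc σ)) (X : Struc σ) (a b : X.carrier) (hab : a ≠ b) : Prop :=
  ∀ A : Amalg (X.inclEmb (pair_compl_subset_left a b)) (X.inclEmb (pair_compl_subset_right a b)),
    MemUpIso F A.Z → A.Iso (canonAmalg X a b hab)

/-- Stably separated: every embedding into a member of `F` sends `a`, `b` to separated
elements. -/
def StablySeparated (F : Set (Struc σ)) (X : Struc σ) (a b : X.carrier) (hab : a ≠ b) : Prop :=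
  ∀ X' : Struc σ, MemUpIso F X' → ∀ f : Emb X X',
    Separated F X' (f.toFun a) (f.toFun b) (fun h => hab (f.inj h))

/-- Isomorphism of marked structures. -/
def MarkedIso (X : Struc σ) (a : X.carrier) (Y : Struc σ) (b : Y.carrier) : Prop :=
  ∃ f : Emb X Y, f.IsIso ∧ f.toFun a = b

/-- `b` is extraneous in the marked structure `(X, a)` if it is separated from `a`. -/
def Extraneous (F : Set (Struc σ)) (X : Struc σ) (a b : X.carrier) : Prop :=
  ∃ h : a ≠ b, Separated F X a b h

/-- A marked structure is minimal if it has no extraneous elements. -/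
def MinimalMarked (F : Set (Struc σ)) (X : Struc σ) (a : X.carrier) : Prop :=
  ∀ b : X.carrier, ¬ Extraneous F X a b

/-- `f : W → X` is a one-point extension missing exactly `a`. -/
def IsOnePointExt {W X : Struc σ} (f : Emb W X) (a : X.carrier) : Prop :=
  Set.range f.toFun = ({a} : Set X.carrier)ᶜ

end Paper

/-! # The ring `Θ(𝔉)` of a Fraïssé class -/

namespace Paper

variable {σ : Signature}

/-- Generators of `Θ(𝔉)`: one for each embedding between members of `𝔉`. -/
def ThetaGen (F : Set (Struc σ)) : Type 1 :=
  Σ (X : {X : Struc σ // X ∈ F}) (Y : {Y : Struc σ // Y ∈ F}), Emb X.1 Y.1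

/-- The polynomial ring on the generators of `Θ(𝔉)`. -/
abbrev ThetaPoly (F : Set (Struc σ)) := MvPolynomial (ThetaGen F) ℤ

/-- The generator `[i]` for an embedding `i : X → Y` between members of `𝔉`. -/
noncomputable def thetaVar {F : Set (Struc σ)} (X Y : Struc σ) (hX : X ∈ F) (hY : Y ∈ F)
    (f : Emb X Y) : ThetaPoly F :=
  MvPolynomial.X ⟨⟨X, hX⟩, ⟨Y, hY⟩, f⟩

/-- The defining relations of `Θ(𝔉)`: `[i] = 1` for isomorphisms, `[j∘i] = [j]·[i]`,
and the amalgamation relations `[i] = Σ_α [i'_α]` where `i'_α` runs over a complete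
irredundant system of representatives of the isomorphism classes of amalgamations
lying in `𝔉`. -/
def ThetaRels (F : Set (Struc σ)) : Set (ThetaPoly F) :=
  {p | ∃ (X Y : Struc σ) (hX : X ∈ F) (hY : Y ∈ F) (f : Emb X Y),
      f.IsIso ∧ p = thetaVar X Y hX hY f - 1} ∪
  {p | ∃ (X Y Z : Struc σ) (hX : X ∈ F) (hY : Y ∈ F) (hZ : Z ∈ F)
      (f : Emb X Y) (g : Emb Y Z),
      p = thetaVar X Z hX hZ (g.comp f) - thetaVar Y Z hY hZ g * thetaVar X Y hX hY f} ∪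
  {p | ∃ (X Y X' : Struc σ) (hX : X ∈ F) (hY : Y ∈ F) (hX' : X' ∈ F)
      (i : Emb X Y) (f : Emb X X') (m : ℕ) (r : Fin m → Amalg i f)
      (hr : ∀ α, (r α).Z ∈ F),
      (∀ A : Amalg i f, MemUpIso F A.Z → ∃ α, A.Iso (r α)) ∧
      (∀ α β, (r α).Iso (r β) → α = β) ∧
      p = thetaVar X Y hX hY i - ∑ α, thetaVar X' (r α).Z hX' (hr α) ((r α).j₂)}

/-- The ring `Θ(𝔉)`. -/
abbrev ThetaRing (F : Set (Struc σ)) : Type 1 :=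
  ThetaPoly F ⧸ Ideal.span (ThetaRels F)

/-- The class `[i] ∈ Θ(𝔉)` of an embedding between members of `𝔉`. -/
noncomputable def thetaClass {F : Set (Struc σ)} (X Y : Struc σ) (hX : X ∈ F) (hY : Y ∈ F)
    (f : Emb X Y) : ThetaRing F :=
  Ideal.Quotient.mk _ (thetaVar X Y hX hY f)

end Paper

namespace Paper

/-- Factor an embedding `p : U → X` through `q : W → X` when the range of `p` lies in
the range of `q`. -/
noncomputable def factor {σ : Signature} {U W X : Struc σ} (p : Emb U X) (q : Emb W X)
    (h : ∀ u, p.toFun u ∈ Set.range q.toFun) : Emb U W where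
  toFun u := (h u).choose
  inj := fun u v huv => p.inj (by
    rw [← (h u).choose_spec, ← (h v).choose_spec]
    exact congrArg q.toFun huv)
  rel_iff := by
    intro ι v
    rw [← q.rel_iff]
    have hfun : (fun m => q.toFun ((h (v m)).choose)) = fun m => p.toFun (v m) := by
      funext m; exact (h (v m)).choose_spec
    rw [hfun, p.rel_iff]

theorem factor_spec {σ : Signature} {U W X : Struc σ} (p : Emb U X) (q : Emb W X)
    (h : ∀ u, p.toFun u ∈ Set.range q.toFun) (u : U.carrier) :
    q.toFun ((factor p q h).toFun u) = p.toFun u := (h u).choose_spec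

/-- **Proposition 2.9**: if `a` and `b` are separated elements of `X ∈ 𝔉`, then
`[X,a] = [X∖{b},a]` in `Θ(𝔉)`.  Here `[X,a]` is the class of any one-point extension
`W → X` with image `X∖{a}` (with `W ∈ 𝔉`), and `[X∖{b},a]` is the class of any one-point
extension `U → V` where `V ∈ 𝔉` embeds into `X` with image `X∖{b}`, `a' ∈ V` corresponds
to `a`, and the image of `U` is `V∖{a'}`. -/
theorem thetaClass_eq_of_separated {σ : Signature} {F : Set (Struc σ)} (hF : IsFraisse F)
    (X : Struc σ) (hX : X ∈ F) (a b : X.carrier) (hab : a ≠ b)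
    (hsep : Separated F X a b hab)
    (W : Struc σ) (hW : W ∈ F) (i : Emb W X) (hi : IsOnePointExt i a)
    (V : Struc σ) (hV : V ∈ F) (j : Emb V X)
    (hj : Set.range j.toFun = ({b} : Set X.carrier)ᶜ)
    (a' : V.carrier) (ha' : j.toFun a' = a)
    (U : Struc σ) (hU : U ∈ F) (k : Emb U V) (hk : IsOnePointExt k a') :
    thetaClass W X hW hX i = thetaClass U V hU hV k := by
  classical
  -- basic facts about ranges
  have hine : ∀ w, i.toFun w ≠ a := by
    intro w h
    have hmem : i.toFun w ∈ Set.range i.toFun := ⟨w, rfl⟩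
    rw [hi] at hmem; simp [h] at hmem
  have hjne : ∀ v, j.toFun v ≠ b := by
    intro v h
    have hmem : j.toFun v ∈ Set.range j.toFun := ⟨v, rfl⟩
    rw [hj] at hmem; simp [h] at hmem
  have hkne : ∀ u, k.toFun u ≠ a' := by
    intro u h
    have hmem : k.toFun u ∈ Set.range k.toFun := ⟨u, rfl⟩
    rw [hk] at hmem; simp [h] at hmem
  have hisurj : ∀ x : X.carrier, x ≠ a → x ∈ Set.range i.toFun := by
    intro x hx; rw [hi]; simpa using hx
  have hjsurj : ∀ x : X.carrier, x ≠ b → x ∈ Set.range j.toFun := by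
    intro x hx; rw [hj]; simpa using hx
  have hksurj : ∀ v : V.carrier, v ≠ a' → v ∈ Set.range k.toFun := by
    intro v hv; rw [hk]; simpa using hv
  have hjkne : ∀ u, j.toFun (k.toFun u) ≠ a := by
    intro u h
    exact hkne u (j.inj (h.trans ha'.symm))
  -- the embedding `e : U → W`
  let e : Emb U W := factor (j.comp k) i (fun u => hisurj _ (hjkne u))
  have he : ∀ u, i.toFun (e.toFun u) = j.toFun (k.toFun u) :=
    fun u => factor_spec (j.comp k) i _ u
  -- the canonical amalgamation of `V` and `W` over `U`
  let A₀ : Amalg k e :=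
    { Z := X
      j₁ := j
      j₂ := i
      comm := fun u => (he u).symm
      surj := by
        intro z
        by_cases hz : z = b
        · exact Or.inr (hisurj z (by rw [hz]; exact fun h => hab h.symm))
        · exact Or.inl (hjsurj z hz) }
  -- inverses of `i` and `j` onto the corresponding substructures of `X`
  let iw : Emb (X.restrict ({a} : Set X.carrier)ᶜ) W :=
    factor (X.subEmb _) i (fun x => hisurj x.1 x.2)
  let jv : Emb (X.restrict ({b} : Set X.carrier)ᶜ) V :=
    factor (X.subEmb _) j (fun x => hjsurj x.1 x.2)
  have hiw : ∀ x, i.toFun (iw.toFun x) = x.1 := fun x => factor_spec _ _ _ x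
  have hjv : ∀ x, j.toFun (jv.toFun x) = x.1 := fun x => factor_spec _ _ _ x
  -- completeness: every amalgamation in `F` is isomorphic to `A₀`
  have hcomp : ∀ A : Amalg k e, MemUpIso F A.Z → A.Iso A₀ := by
    intro A hAZ
    -- key factorization fact used twice
    have key : ∀ x : X.carrier, x ≠ a → x ≠ b →
        ∃ u : U.carrier, j.toFun (k.toFun u) = x := by
      intro x hxa hxb
      obtain ⟨v0, hv0⟩ := hjsurj x hxb
      have hv0a : v0 ≠ a' := by
        intro h; rw [h, ha'] at hv0; exact hxa hv0.symm
      obtain ⟨u, hu⟩ := hksurj v0 hv0a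
      exact ⟨u, by rw [hu, hv0]⟩
    let B : Amalg (X.inclEmb (pair_compl_subset_left a b))
        (X.inclEmb (pair_compl_subset_right a b)) :=
      { Z := A.Z
        j₁ := A.j₂.comp iw
        j₂ := A.j₁.comp jv
        comm := by
          intro x
          have hxa : x.1 ≠ a := fun h => x.2 (Or.inl h)
          have hxb : x.1 ≠ b := fun h => x.2 (Or.inr h)
          obtain ⟨u, hu⟩ := key x.1 hxa hxb
          show A.j₂.toFun (iw.toFun ⟨x.1, _⟩) = A.j₁.toFun (jv.toFun ⟨x.1, _⟩)
          have h1 : iw.toFun ⟨x.1, pair_compl_subset_left a b x.2⟩ = e.toFun u :=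
            i.inj (by exact (hiw _).trans (hu.symm.trans (he u).symm))
          have h2 : jv.toFun ⟨x.1, pair_compl_subset_right a b x.2⟩ = k.toFun u :=
            j.inj (by exact (hjv _).trans hu.symm)
          rw [h1, h2, ← A.comm u]
        surj := by
          intro z
          rcases A.surj z with ⟨v0, hv0⟩ | ⟨w0, hw0⟩
          · refine Or.inr ⟨⟨j.toFun v0, hjne v0⟩, ?_⟩
            have h2 : jv.toFun ⟨j.toFun v0, hjne v0⟩ = v0 := j.inj (hjv _)
            show A.j₁.toFun (jv.toFun _) = z
            rw [h2, hv0]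
          · refine Or.inl ⟨⟨i.toFun w0, hine w0⟩, ?_⟩
            have h1 : iw.toFun ⟨i.toFun w0, hine w0⟩ = w0 := i.inj (hiw _)
            show A.j₂.toFun (iw.toFun _) = z
            rw [h1, hw0] }
    obtain ⟨g, giso, g1, g2⟩ := hsep B hAZ
    refine ⟨g, giso, ?_, ?_⟩
    · intro v0
      have h2 : jv.toFun ⟨j.toFun v0, hjne v0⟩ = v0 := j.inj (hjv _)
      have hg : g.toFun (A.j₁.toFun (jv.toFun ⟨j.toFun v0, hjne v0⟩)) = j.toFun v0 :=
        g2 ⟨j.toFun v0, hjne v0⟩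
      rwa [h2] at hg
    · intro w0
      have h1 : iw.toFun ⟨i.toFun w0, hine w0⟩ = w0 := i.inj (hiw _)
      have hg : g.toFun (A.j₂.toFun (iw.toFun ⟨i.toFun w0, hine w0⟩)) = i.toFun w0 :=
        g1 ⟨i.toFun w0, hine w0⟩
      rwa [h1] at hg
  -- the amalgamation relation
  have hp : thetaVar U V hU hV k - thetaVar W X hW hX i ∈ ThetaRels F := by
    refine Or.inr ⟨U, V, W, hU, hV, hW, k, e, 1, fun _ => A₀, fun _ => hX,
      fun A hA => ⟨0, hcomp A hA⟩, fun α β _ => Subsingleton.elim α β, ?_⟩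
    rw [Fin.sum_univ_one]
  show Ideal.Quotient.mk _ _ = Ideal.Quotient.mk _ _
  rw [Ideal.Quotient.eq]
  have h2 := neg_mem (Ideal.subset_span hp)
  rwa [neg_sub] at h2

end Paper
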